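/- Let n ≥ 2 and g ≥ 1 be integers. Then, as rational numbers, ((n² - n - 2)·g)/(2·(n-1)²) ≤ (n-1)·g - n·⌊g/2⌋, and equality holds if and only if (n = 2 or n = 3) and g is even. -/

import Mathlib

/-- Lemma 4.5: for integers n ≥ 2, g ≥ 1, as rationals
((n² - n - 2)·g)/(2(n-1)²) ≤ (n-1)g - n⌊g/2⌋, with equality iff (n = 2 or n = 3) and g even. -/
theorem stmt_0 (n g : ℤ) (hn : 2 ≤ n) (hg : 1 ≤ g) :
    (((n : ℚ)^2 - n - 2) * g) / (2 * ((n : ℚ) - 1)^2)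
      ≤ ((n : ℚ) - 1) * g - n * (⌊(g : ℚ) / 2⌋ : ℚ) ∧
    ((((n : ℚ)^2 - n - 2) * g) / (2 * ((n : ℚ) - 1)^2)
      = ((n : ℚ) - 1) * g - n * (⌊(g : ℚ) / 2⌋ : ℚ) ↔ (n = 2 ∨ n = 3) ∧ Even g) := by
  have hfl : ⌊(g : ℚ) / 2⌋ = g / 2 := by
    have := Rat.floor_intCast_div_natCast g 2
    simpa using this
  set q : ℤ := g / 2 with hqdef
  set r : ℤ := g % 2 with hrdef
  have hge : g = 2 * q + r := by omega
  have hr01 : r = 0 ∨ r = 1 := by omega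
  have hpos : (0 : ℚ) < 2 * ((n : ℚ) - 1)^2 := by
    have hn' : (2 : ℚ) ≤ (n : ℚ) := by exact_mod_cast hn
    nlinarith
  -- key identity in ℤ
  have hfact : ((n-1)*g - n*q) * (2*(n-1)^2) - (n^2 - n - 2) * g
      = n*(n-2)*(n-3)*g + n*(n-1)^2*r := by
    rw [hge]; ring
  have h23 : 0 ≤ (n-2)*(n-3) := by
    rcases le_or_gt n 2 with h | h
    · have : n = 2 := le_antisymm h hn
      simp [this]
    · have h3 : 3 ≤ n := h
      have := mul_nonneg (by omega : (0:ℤ) ≤ n - 2) (by omega : (0:ℤ) ≤ n - 3)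
      linarith
  have hterm1 : 0 ≤ n*(n-2)*(n-3)*g := by
    have := mul_nonneg (mul_nonneg (by omega : (0:ℤ) ≤ n) h23) (by omega : (0:ℤ) ≤ g)
    nlinarith
  have hterm2 : 0 ≤ n*(n-1)^2*r := by
    have := mul_nonneg (mul_nonneg (by omega : (0:ℤ) ≤ n) (sq_nonneg (n-1))) (by omega : (0:ℤ) ≤ r)
    linarith
  have hineqZ : (n^2 - n - 2) * g ≤ ((n-1)*g - n*q) * (2*(n-1)^2) := by linarith
  constructor
  · rw [div_le_iff₀ hpos, hfl]
    push_cast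
    exact_mod_cast hineqZ
  · rw [div_eq_iff (ne_of_gt hpos), hfl]
    have heqZ : (((n : ℚ)^2 - n - 2) * g = (((n : ℚ) - 1) * g - n * ((q : ℤ) : ℚ)) * (2 * ((n : ℚ) - 1)^2))
        ↔ (n^2 - n - 2) * g = ((n-1)*g - n*q) * (2*(n-1)^2) := by
      constructor
      · intro h; exact_mod_cast h
      · intro h; exact_mod_cast h
    push_cast
    rw [show (((n:ℚ)-1) * g - n * ((g/2 : ℤ):ℚ)) = (((n:ℚ) - 1) * g - n * ((q : ℤ) : ℚ)) by rw [hqdef],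
      heqZ]
    constructor
    · intro h
      have hz : n*(n-2)*(n-3)*g + n*(n-1)^2*r = 0 := by linarith
      have hr0 : r = 0 := by
        by_contra hc
        have hr1 : r = 1 := by omega
        have : 0 < n*(n-1)^2*r := by
          rw [hr1, mul_one]
          have h1 : 0 < (n-1)^2 := by nlinarith
          nlinarith
        linarith
      have h1 : n*(n-2)*(n-3)*g = 0 := by
        rw [hr0] at hz; linarith
      have hn0 : (n-2)*(n-3) = 0 := by
        rcases mul_eq_zero.mp (by nlinarith : (n*((n-2)*(n-3)))*g = 0) with h | h
        · rcases mul_eq_zero.mp h with h' | h'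
          · omega
          · exact h'
        · omega
      refine ⟨?_, ?_⟩
      · rcases mul_eq_zero.mp hn0 with h' | h' <;> omega
      · rw [Int.even_iff]; omega
    · rintro ⟨hn23, hev⟩
      have hr0 : r = 0 := by rw [Int.even_iff] at hev; omega
      have hz : n*(n-2)*(n-3)*g + n*(n-1)^2*r = 0 := by
        rw [hr0, mul_zero, add_zero]
        rcases hn23 with h | h <;> rw [h] <;> ring
      linarith
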